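/- arXiv:1112.2606 — 5 statements merged into one kernel-verified Lean document; each statement's English description precedes it below -/
import Mathlib

section
/- The product defined on the vector space with basis (e_i)_{i≥1} by e_i ∘ e_j = (λj − μ)e_{i+j}, for fixed scalars λ, μ in a field K of characteristic zero, is left pre-Lie: for all x, y, z, (x∘y)∘z − x∘(y∘z) = (y∘x)∘z − y∘(x∘z). -/
/-- The vector space with basis `(e_i)_{i ≥ 1}` (realized as `ℕ+ →₀ K`), equipped with the
bilinear product determined on basis elements by `e_i ∘ e_j = (λ j - μ) e_{i+j}`. -/
noncomputable def fdbMul (K : Type*) [Field K] (lam mu : K) (x y : ℕ+ →₀ K) : ℕ+ →₀ K :=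
  x.sum fun i a => y.sum fun j b => Finsupp.single (i + j) (a * b * (lam * ((j : ℕ) : K) - mu))

lemma fdbMul_zero_left (K : Type*) [Field K] (lam mu : K) (y : ℕ+ →₀ K) :
    fdbMul K lam mu 0 y = 0 := by
  simp [fdbMul]

lemma fdbMul_zero_right (K : Type*) [Field K] (lam mu : K) (x : ℕ+ →₀ K) :
    fdbMul K lam mu x 0 = 0 := by
  simp [fdbMul]

lemma fdbMul_add_left (K : Type*) [Field K] (lam mu : K) (x y z : ℕ+ →₀ K) :
    fdbMul K lam mu (x + y) z = fdbMul K lam mu x z + fdbMul K lam mu y z := by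
  unfold fdbMul
  apply Finsupp.sum_add_index' <;> intros <;>
    simp [add_mul, Finsupp.sum_add]

lemma fdbMul_add_right (K : Type*) [Field K] (lam mu : K) (x y z : ℕ+ →₀ K) :
    fdbMul K lam mu x (y + z) = fdbMul K lam mu x y + fdbMul K lam mu x z := by
  unfold fdbMul
  rw [← Finsupp.sum_add]
  apply Finsupp.sum_congr
  intro i _
  apply Finsupp.sum_add_index' <;> intros <;>
    simp [mul_add, add_mul, Finsupp.single_add]

lemma fdbMul_single (K : Type*) [Field K] (lam mu : K) (i j : ℕ+) (a b : K) :
    fdbMul K lam mu (Finsupp.single i a) (Finsupp.single j b) =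
      Finsupp.single (i + j) (a * b * (lam * ((j : ℕ) : K) - mu)) := by
  classical
  unfold fdbMul
  rw [Finsupp.sum_single_index, Finsupp.sum_single_index]
  · simp
  · rw [Finsupp.sum_single_index] <;> simp

/-- The product `e_i ∘ e_j = (λ j − μ) e_{i+j}` is left pre-Lie:
`(x∘y)∘z − x∘(y∘z) = (y∘x)∘z − y∘(x∘z)`. -/
theorem fdbMul_leftPreLie (K : Type*) [Field K] [CharZero K] (lam mu : K)
    (x y z : ℕ+ →₀ K) :
    fdbMul K lam mu (fdbMul K lam mu x y) z - fdbMul K lam mu x (fdbMul K lam mu y z) =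
      fdbMul K lam mu (fdbMul K lam mu y x) z - fdbMul K lam mu y (fdbMul K lam mu x z) := by
  induction x using Finsupp.induction_linear with
  | zero => simp [fdbMul_zero_left, fdbMul_zero_right]
  | add f g hf hg =>
      simp only [fdbMul_add_left, fdbMul_add_right] at *
      abel_nf at hf hg ⊢
      linear_combination (norm := abel) hf + hg
  | single i a =>
    induction y using Finsupp.induction_linear with
    | zero => simp [fdbMul_zero_left, fdbMul_zero_right]
    | add f g hf hg =>
        simp only [fdbMul_add_left, fdbMul_add_right] at *
        abel_nf at hf hg ⊢
        linear_combination (norm := abel) hf + hg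
    | single j b =>
      induction z using Finsupp.induction_linear with
      | zero => simp [fdbMul_zero_left, fdbMul_zero_right]
      | add f g hf hg =>
          simp only [fdbMul_add_left, fdbMul_add_right] at *
          abel_nf at hf hg ⊢
          linear_combination (norm := abel) hf + hg
      | single k c =>
        simp only [fdbMul_single]
        rw [show i + j + k = j + i + k by ring, show j + (i + k) = j + i + k by ring,
          show i + (j + k) = j + i + k by ring]
        rw [← Finsupp.single_sub, ← Finsupp.single_sub]
        congr 1
        push_cast
        ring
end

section
/- In the Faà di Bruno pre-Lie algebra with product e_i ∘ e_j = (λj − μ)e_{i+j}, the extended product on the symmetric algebra satisfies (e_{i_1} ⋯ e_{i_m}) ∘ e_j = (λj − μ)(λj)(λj + μ) ⋯ (λj + (m−2)μ) e_{i_1+⋯+i_m+j} for all m ≥ 1. -/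
open MvPolynomial

lemma sum_update_nat {m : ℕ} (e : Fin m → ℕ+) (k : Fin m) (i : ℕ+) :
    (∑ l, ((Function.update e k (i + e k) l : ℕ))) = (i : ℕ) + ∑ l, ((e l : ℕ)) := by
  classical
  have : (fun l => ((Function.update e k (i + e k) l : ℕ)))
      = Function.update (fun l => ((e l : ℕ))) k ((i : ℕ) + (e k : ℕ)) := by
    ext l
    by_cases h : l = k
    · subst h; simp
    · simp [Function.update_of_ne h]
  rw [this, Finset.sum_update_of_mem (Finset.mem_univ k)]
  rw [← Finset.add_sum_erase _ _ (Finset.mem_univ k), Finset.sdiff_singleton_eq_erase]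
  ring

lemma lemD (K : Type*) [Field K] [CharZero K] (lam mu : K)
    (mul : MvPolynomial ℕ+ K →ₗ[K] MvPolynomial ℕ+ K →ₗ[K] MvPolynomial ℕ+ K)
    (hXone : ∀ i : ℕ+, mul (X i) 1 = 0)
    (hXX : ∀ i j : ℕ+, mul (X i) (X j) = (lam * ((j : ℕ) : K) - mu) • X (i + j))
    (hLeib : ∀ (i : ℕ+) (b c : MvPolynomial ℕ+ K),
      mul (X i) (b * c) = mul (X i) b * c + b * mul (X i) c) :
    ∀ (m : ℕ) (e : Fin m → ℕ+) (i : ℕ+),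
      mul (X i) (∏ k, X (e k)) =
        ∑ k, (lam * ((e k : ℕ) : K) - mu) •
          ∏ l, X (Function.update e k (i + e k) l) := by
  intro m
  induction m with
  | zero => intro e i; simp [hXone]
  | succ m ih =>
    intro e i
    rw [Fin.prod_univ_succ, hLeib, hXX, Fin.sum_univ_succ]
    have h1 : (∏ l, X (Function.update e 0 (i + e 0) l) : MvPolynomial ℕ+ K)
        = X (i + e 0) * ∏ k : Fin m, X (e k.succ) := by
      rw [Fin.prod_univ_succ, Function.update_self]
      exact congrArg _ (Finset.prod_congr rfl fun l _ =>
        congrArg X (Function.update_of_ne (Fin.succ_ne_zero l) _ _))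
    have h2 : ∀ k : Fin m,
        (∏ l, X (Function.update e k.succ (i + e k.succ) l) : MvPolynomial ℕ+ K)
        = X (e 0) * ∏ l : Fin m, X (Function.update (fun s => e s.succ) k (i + e k.succ) l) := by
      intro k
      rw [Fin.prod_univ_succ, Function.update_of_ne (Ne.symm (Fin.succ_ne_zero k))]
      refine congrArg _ (Finset.prod_congr rfl fun l _ => congrArg X ?_)
      by_cases h : l = k
      · subst h; simp
      · rw [Function.update_of_ne h, Function.update_of_ne
          (fun hh => h (Fin.succ_injective m hh))]
    rw [h1, ih (fun k => e k.succ), Finset.mul_sum, smul_mul_assoc]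
    congr 1
    refine Finset.sum_congr rfl fun k _ => ?_
    rw [h2 k, mul_smul_comm]

lemma lemP (K : Type*) [Field K] [CharZero K] (lam mu : K)
    (mul : MvPolynomial ℕ+ K →ₗ[K] MvPolynomial ℕ+ K →ₗ[K] MvPolynomial ℕ+ K)
    (hone : ∀ b, mul 1 b = b)
    (hXone : ∀ i : ℕ+, mul (X i) 1 = 0)
    (hXX : ∀ i j : ℕ+, mul (X i) (X j) = (lam * ((j : ℕ) : K) - mu) • X (i + j))
    (hXa : ∀ (i : ℕ+) (a b : MvPolynomial ℕ+ K),
      mul (X i * a) b = mul (X i) (mul a b) - mul (mul (X i) a) b)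
    (hLeib : ∀ (i : ℕ+) (b c : MvPolynomial ℕ+ K),
      mul (X i) (b * c) = mul (X i) b * c + b * mul (X i) c) :
    ∀ (m : ℕ) (e : Fin m → ℕ+) (j : ℕ+),
    mul (∏ k, X (e k)) (X j) =
      (∏ k ∈ Finset.range m, (lam * ((j : ℕ) : K) + ((k : K) - 1) * mu)) •
        X (⟨(∑ k, ((e k : ℕ))) + (j : ℕ), Nat.add_pos_right _ j.2⟩ : ℕ+) := by
  intro m
  induction m with
  | zero =>
    intro e j
    have hj : (⟨(∑ k : Fin 0, ((e k : ℕ))) + (j : ℕ), Nat.add_pos_right _ j.2⟩ : ℕ+) = j :=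
      Subtype.ext (by show (∑ k : Fin 0, ((e k : ℕ))) + (j : ℕ) = (j : ℕ); simp)
    rw [hj]
    simp [hone]
    exact (one_smul K _).symm
  | succ m ih =>
    intro e j
    have hS : (⟨(∑ k : Fin (m+1), ((e k : ℕ))) + (j : ℕ),
          Nat.add_pos_right _ j.2⟩ : ℕ+)
        = @HAdd.hAdd ℕ+ ℕ+ ℕ+ _ (e 0) ⟨(∑ k : Fin m, ((e k.succ : ℕ))) + (j : ℕ), Nat.add_pos_right _ j.2⟩ := by
      apply Subtype.ext
      show (∑ k : Fin (m+1), ((e k : ℕ))) + (j : ℕ)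
        = (e 0 : ℕ) + ((∑ k : Fin m, ((e k.succ : ℕ))) + (j : ℕ))
      rw [Fin.sum_univ_succ]; ring
    rw [Fin.prod_univ_succ, hXa, ih (fun k => e k.succ) j]
    erw [map_smul, hXX]
    rw [lemD K lam mu mul hXone hXX hLeib m (fun k => e k.succ) (e 0)]
    simp only [map_sum, LinearMap.sum_apply, map_smul, LinearMap.smul_apply]
    have hterm : ∀ k : Fin m,
        mul (∏ l, X (Function.update (fun s => e s.succ) k (e 0 + e k.succ) l)) (X j)
        = (∏ k ∈ Finset.range m, (lam * ((j : ℕ) : K) + ((k : K) - 1) * mu)) •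
          X (⟨(∑ k : Fin (m+1), ((e k : ℕ))) + (j : ℕ), Nat.add_pos_right _ j.2⟩ : ℕ+) := by
      intro k
      rw [ih (Function.update (fun s => e s.succ) k (e 0 + e k.succ)) j]
      congr 1
      refine congrArg X (Subtype.ext ?_)
      show (∑ l, ((Function.update (fun s => e s.succ) k (e 0 + e k.succ) l : ℕ))) + (j : ℕ)
        = (∑ k : Fin (m+1), ((e k : ℕ))) + (j : ℕ)
      rw [sum_update_nat, Fin.sum_univ_succ]
    simp only [hterm, smul_smul]
    rw [hS, ← Finset.sum_smul]
    erw [smul_smul, ← sub_smul]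
    congr 1
    have hsum : (∑ k : Fin m, (lam * (((e k.succ : ℕ)) : K) - mu))
        = lam * ((∑ k : Fin m, ((e k.succ : ℕ)) : ℕ) : K) - (m : K) * mu := by
      rw [Finset.sum_sub_distrib]
      push_cast
      rw [← Finset.mul_sum]
      simp [mul_comm]
    rw [hsum, Finset.prod_range_succ]
    push_cast [PNat.mk_coe]
    ring

/-- In the Faà di Bruno pre-Lie algebra `g` with basis `(e_i)_{i≥1}` and product
`e_i ∘ e_j = (λ j − μ) e_{i+j}`, the product extended to the symmetric algebra
`S(g)` (realized as `MvPolynomial ℕ+ K`, with `e_i = X i`) by the Oudom–Guin rules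
satisfies `(e_{i_1} ⋯ e_{i_m}) ∘ e_j = (λj − μ)(λj)(λj + μ) ⋯ (λj + (m−2)μ) e_{i_1+⋯+i_m+j}`
for all `m ≥ 1`. -/
theorem fdb_symmAlg_prod (K : Type*) [Field K] [CharZero K] (lam mu : K)
    (mul : MvPolynomial ℕ+ K →ₗ[K] MvPolynomial ℕ+ K →ₗ[K] MvPolynomial ℕ+ K)
    -- Oudom–Guin rules (for `b` a generator and consequences of the coproduct rule):
    (hone : ∀ b, mul 1 b = b)
    (hXone : ∀ i : ℕ+, mul (X i) 1 = 0)
    (hXX : ∀ i j : ℕ+, mul (X i) (X j) = (lam * ((j : ℕ) : K) - mu) • X (i + j))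
    (hXa : ∀ (i : ℕ+) (a b : MvPolynomial ℕ+ K),
      mul (X i * a) b = mul (X i) (mul a b) - mul (mul (X i) a) b)
    (hLeib : ∀ (i : ℕ+) (b c : MvPolynomial ℕ+ K),
      mul (X i) (b * c) = mul (X i) b * c + b * mul (X i) c)
    (m : ℕ) (hm : 1 ≤ m) (e : Fin m → ℕ+) (j : ℕ+) :
    mul (∏ k, X (e k)) (X j) =
      (∏ k ∈ Finset.range m, (lam * ((j : ℕ) : K) + ((k : K) - 1) * mu)) •
        X (⟨(∑ k, ((e k : ℕ))) + (j : ℕ), by exact Nat.add_pos_right _ j.2⟩ : ℕ+) := by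
  exact lemP K lam mu mul hone hXone hXX hXa hLeib m e j
end

section
/- Consider the Dyson–Schwinger equation x = Σ_{j∈J, m|j} B_j(1 + αx) + Σ_{j∈J, m∤j} B_j(1) in (the completion of) the Connes–Kreimer Hopf algebra of rooted trees decorated by J ⊆ ℕ*, where m ≥ 1 is such that the elements of J divisible by m generate mℤ and no element of J not divisible by m is divisible by m. Then the unique solution x = Σ_n x(n) satisfies Δ(x(n)) = x(n)⊗1 + 1⊗x(n) + α Σ_{1≤k≤n−1, m|k} x(n−k)⊗x(k); in particular the subalgebra generated by the x(n) is a Hopf subalgebra. -/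
open TensorProduct

/-- Consider the Dyson–Schwinger equation
`x = Σ_{j∈J, m|j} B_j(1 + αx) + Σ_{j∈J, m∤j} B_j(1)`
in (the completion of) the Connes–Kreimer Hopf algebra of rooted trees decorated by `J ⊆ ℕ*`
(abstracted here to any Hopf algebra `H` with 1-cocycles `B j`, `j ∈ J`, the solution given by
its family of homogeneous components `x n` satisfying the componentwise equation), where `m ≥ 1`
is such that the elements of `J` divisible by `m` generate `mℤ`.
Then `Δ(x(n)) = x(n)⊗1 + 1⊗x(n) + α Σ_{1≤k≤n−1, m|k} x(n−k)⊗x(k)`; in particular the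
subalgebra generated by the `x(n)` is a Hopf subalgebra. -/
theorem DSE_solution_comul (K : Type*) [Field K] [CharZero K]
    (H : Type*) [CommRing H] [HopfAlgebra K H]
    (α : K) (hα : α ≠ 0) (m : ℕ) (hm : 1 ≤ m)
    (J : Set ℕ) [DecidablePred (· ∈ J)]
    (hJpos : ∀ n ∈ J, 0 < n)
    (hgen : AddSubgroup.closure ((fun n : ℕ => (n : ℤ)) '' {n ∈ J | m ∣ n}) =
      AddSubgroup.zmultiples (m : ℤ))
    (B : ℕ → H →ₗ[K] H)
    -- the `B j` are 1-cocycles: `Δ(B_j y) = B_j y ⊗ 1 + (Id ⊗ B_j)(Δ y)`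
    (hB : ∀ j ∈ J, ∀ y : H, Coalgebra.comul (R := K) (B j y) =
      B j y ⊗ₜ[K] 1 + TensorProduct.map LinearMap.id (B j) (Coalgebra.comul (R := K) y))
    (x : ℕ → H) (hx0 : x 0 = 0)
    -- componentwise form of the Dyson–Schwinger equation
    (hx : ∀ n, 1 ≤ n → x n = (if n ∈ J then B n 1 else 0) +
      α • ∑ j ∈ (Finset.range (n + 1)).filter (fun j => j ∈ J ∧ m ∣ j), B j (x (n - j))) :
    (∀ n, 1 ≤ n → Coalgebra.comul (R := K) (x n) =
      x n ⊗ₜ[K] 1 + 1 ⊗ₜ[K] x n +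
        α • ∑ k ∈ (Finset.Ioo 0 n).filter (fun k => m ∣ k), x (n - k) ⊗ₜ[K] x k) ∧
    (∀ n, Coalgebra.comul (R := K) (x n) ∈
      LinearMap.range (TensorProduct.mapIncl
        (Subalgebra.toSubmodule (Algebra.adjoin K (Set.range x)))
        (Subalgebra.toSubmodule (Algebra.adjoin K (Set.range x))))) := by
  classical
  have hcomul : ∀ n, 1 ≤ n → Coalgebra.comul (R := K) (x n) =
      x n ⊗ₜ[K] 1 + 1 ⊗ₜ[K] x n +
        α • ∑ k ∈ (Finset.Ioo 0 n).filter (fun k => m ∣ k), x (n - k) ⊗ₜ[K] x k := by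
    intro n
    induction n using Nat.strong_induction_on with
    | _ n IH =>
    intro hn
    -- expansion of each `B`-term via the cocycle property and the induction hypothesis
    have hterm : ∀ j ∈ (Finset.range (n+1)).filter (fun j => j ∈ J ∧ m ∣ j),
        Coalgebra.comul (R := K) (B j (x (n - j))) =
          B j (x (n-j)) ⊗ₜ[K] 1 + x (n-j) ⊗ₜ[K] B j 1 + 1 ⊗ₜ[K] B j (x (n-j)) +
          α • ∑ k ∈ (Finset.Ioo 0 (n-j)).filter (fun k => m ∣ k),
            x (n-j-k) ⊗ₜ[K] B j (x k) := by
      intro j hj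
      simp only [Finset.mem_filter, Finset.mem_range, Nat.lt_succ_iff] at hj
      obtain ⟨hjn, hjJ, hjm⟩ := hj
      rcases eq_or_lt_of_le hjn with h | h
      · subst h
        simp [hx0]
      · have h2 : n - j < n := by have := hJpos j hjJ; omega
        have h1 : 1 ≤ n - j := by omega
        rw [hB j hjJ, IH (n-j) h2 h1, map_add, map_add, map_smul, map_sum]
        simp only [TensorProduct.map_tmul, LinearMap.id_coe, id_eq]
        module
    have hif : Coalgebra.comul (R := K) (if n ∈ J then B n 1 else 0) =
        (if n ∈ J then B n 1 else 0) ⊗ₜ[K] 1 + 1 ⊗ₜ[K] (if n ∈ J then B n 1 else 0) := by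
      split_ifs with h
      · rw [hB n h 1]
        simp [Algebra.TensorProduct.one_def]
      · simp
    have hxk : ∀ k ∈ (Finset.Ioo 0 n).filter (fun k => m ∣ k),
        x (n-k) ⊗ₜ[K] x k =
          x (n-k) ⊗ₜ[K] (if k ∈ J then B k 1 else 0) +
          α • ∑ j ∈ (Finset.range (k+1)).filter (fun j => j ∈ J ∧ m ∣ j),
            x (n-k) ⊗ₜ[K] B j (x (k-j)) := by
      intro k hk
      simp only [Finset.mem_filter, Finset.mem_Ioo] at hk
      rw [hx k hk.1.1, TensorProduct.tmul_add, TensorProduct.tmul_smul,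
        TensorProduct.tmul_sum]
    -- first sum identity
    have h1 : ∑ k ∈ (Finset.Ioo 0 n).filter (fun k => m ∣ k),
        x (n-k) ⊗ₜ[K] (if k ∈ J then B k 1 else 0) =
        ∑ j ∈ (Finset.range (n+1)).filter (fun j => j ∈ J ∧ m ∣ j),
          x (n-j) ⊗ₜ[K] B j 1 := by
      have e : ∀ k, x (n-k) ⊗ₜ[K] (if k ∈ J then B k 1 else 0)
          = if k ∈ J then x (n-k) ⊗ₜ[K] B k 1 else 0 := by
        intro k; split_ifs <;> simp
      rw [Finset.sum_congr rfl (fun k _ => e k), ← Finset.sum_filter]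
      refine Finset.sum_subset ?_ ?_
      · intro k hk
        simp only [Finset.mem_filter, Finset.mem_Ioo, Finset.mem_range] at hk ⊢
        exact ⟨by omega, hk.2, hk.1.2⟩
      · intro k hk hk'
        simp only [Finset.mem_filter, Finset.mem_range, Nat.lt_succ_iff] at hk
        obtain ⟨hkn, hkJ, hkm⟩ := hk
        have hk0 : 0 < k := hJpos k hkJ
        have : k = n := by
          rcases eq_or_lt_of_le hkn with h | h
          · exact h
          · exfalso
            apply hk'
            simp only [Finset.mem_filter, Finset.mem_Ioo]
            exact ⟨⟨⟨hk0, h⟩, hkm⟩, hkJ⟩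
        subst this
        simp [hx0]
    -- second (double) sum identity
    have h2 : ∑ k ∈ (Finset.Ioo 0 n).filter (fun k => m ∣ k),
        ∑ j ∈ (Finset.range (k+1)).filter (fun j => j ∈ J ∧ m ∣ j),
          x (n-k) ⊗ₜ[K] B j (x (k-j))
        = ∑ j ∈ (Finset.range (n+1)).filter (fun j => j ∈ J ∧ m ∣ j),
            ∑ k ∈ (Finset.Ioo 0 (n-j)).filter (fun k => m ∣ k),
              x (n-j-k) ⊗ₜ[K] B j (x k) := by
      have e : ∀ k ∈ (Finset.Ioo 0 n).filter (fun k => m ∣ k),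
          ∑ j ∈ (Finset.range (k+1)).filter (fun j => j ∈ J ∧ m ∣ j),
            x (n-k) ⊗ₜ[K] B j (x (k-j))
          = ∑ j ∈ (Finset.range k).filter (fun j => j ∈ J ∧ m ∣ j),
            x (n-k) ⊗ₜ[K] B j (x (k-j)) := by
        intro k hk
        refine (Finset.sum_subset ?_ ?_).symm
        · intro j hj
          simp only [Finset.mem_filter, Finset.mem_range] at hj ⊢
          exact ⟨by omega, hj.2⟩
        · intro j hj hj'
          simp only [Finset.mem_filter, Finset.mem_range, Nat.lt_succ_iff] at hj
          obtain ⟨hjk, hjJ, hjm⟩ := hj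
          have : j = k := by
            rcases eq_or_lt_of_le hjk with h | h
            · exact h
            · exfalso
              apply hj'
              simp only [Finset.mem_filter, Finset.mem_range]
              exact ⟨h, hjJ, hjm⟩
          subst this
          simp [hx0]
      rw [Finset.sum_congr rfl e, Finset.sum_sigma', Finset.sum_sigma']
      refine Finset.sum_nbij' (fun p => ⟨p.2, p.1 - p.2⟩) (fun p => ⟨p.1 + p.2, p.1⟩)
        ?_ ?_ ?_ ?_ ?_
      · rintro ⟨k, j⟩ hp
        simp only [Finset.mem_sigma, Finset.mem_filter, Finset.mem_Ioo,
          Finset.mem_range] at hp ⊢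
        obtain ⟨⟨⟨hk0, hkn⟩, hkm⟩, hjk, hjJ, hjm⟩ := hp
        exact ⟨⟨by omega, hjJ, hjm⟩, ⟨by omega, by omega⟩, Nat.dvd_sub hkm hjm⟩
      · rintro ⟨j, k⟩ hp
        simp only [Finset.mem_sigma, Finset.mem_filter, Finset.mem_Ioo,
          Finset.mem_range] at hp ⊢
        obtain ⟨⟨hjn, hjJ, hjm⟩, ⟨hk0, hkn⟩, hkm⟩ := hp
        have hj0 : 0 < j := hJpos j hjJ
        exact ⟨⟨⟨by omega, by omega⟩, (Nat.dvd_add_right hjm).mpr hkm⟩, by omega, hjJ, hjm⟩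
      · rintro ⟨k, j⟩ hp
        simp only [Finset.mem_sigma, Finset.mem_filter, Finset.mem_Ioo,
          Finset.mem_range] at hp
        have : j + (k - j) = k := by omega
        simp [this]
      · rintro ⟨j, k⟩ hp
        simp only [Finset.mem_sigma, Finset.mem_filter, Finset.mem_Ioo,
          Finset.mem_range] at hp
        have : j + k - j = k := by omega
        simp [this]
      · rintro ⟨k, j⟩ hp
        simp only [Finset.mem_sigma, Finset.mem_filter, Finset.mem_Ioo,
          Finset.mem_range] at hp
        have : n - j - (k - j) = n - k := by omega
        simp [this]
    -- assemble
    have lhs_eq : Coalgebra.comul (R := K) (x n) =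
        (if n ∈ J then B n 1 else 0) ⊗ₜ[K] 1 + 1 ⊗ₜ[K] (if n ∈ J then B n 1 else 0) +
        α • ∑ j ∈ (Finset.range (n+1)).filter (fun j => j ∈ J ∧ m ∣ j),
          (B j (x (n-j)) ⊗ₜ[K] 1) +
        α • ∑ j ∈ (Finset.range (n+1)).filter (fun j => j ∈ J ∧ m ∣ j),
          (x (n-j) ⊗ₜ[K] B j 1) +
        α • ∑ j ∈ (Finset.range (n+1)).filter (fun j => j ∈ J ∧ m ∣ j),
          ((1 : H) ⊗ₜ[K] B j (x (n-j))) +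
        (α * α) • ∑ j ∈ (Finset.range (n+1)).filter (fun j => j ∈ J ∧ m ∣ j),
          ∑ k ∈ (Finset.Ioo 0 (n-j)).filter (fun k => m ∣ k),
            x (n-j-k) ⊗ₜ[K] B j (x k) := by
      conv_lhs => rw [hx n hn]
      rw [map_add, map_smul, map_sum, Finset.sum_congr rfl hterm, hif]
      simp only [Finset.sum_add_distrib, ← Finset.smul_sum, smul_add, smul_smul]
      module
    have rhs_eq : x n ⊗ₜ[K] (1 : H) + (1 : H) ⊗ₜ[K] x n +
        α • ∑ k ∈ (Finset.Ioo 0 n).filter (fun k => m ∣ k), x (n - k) ⊗ₜ[K] x k =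
        (if n ∈ J then B n 1 else 0) ⊗ₜ[K] 1 + 1 ⊗ₜ[K] (if n ∈ J then B n 1 else 0) +
        α • ∑ j ∈ (Finset.range (n+1)).filter (fun j => j ∈ J ∧ m ∣ j),
          (B j (x (n-j)) ⊗ₜ[K] 1) +
        α • ∑ k ∈ (Finset.Ioo 0 n).filter (fun k => m ∣ k),
          (x (n-k) ⊗ₜ[K] (if k ∈ J then B k 1 else 0)) +
        α • ∑ j ∈ (Finset.range (n+1)).filter (fun j => j ∈ J ∧ m ∣ j),
          ((1 : H) ⊗ₜ[K] B j (x (n-j))) +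
        (α * α) • ∑ k ∈ (Finset.Ioo 0 n).filter (fun k => m ∣ k),
          ∑ j ∈ (Finset.range (k+1)).filter (fun j => j ∈ J ∧ m ∣ j),
            x (n-k) ⊗ₜ[K] B j (x (k-j)) := by
      conv_lhs => rw [hx n hn, Finset.sum_congr rfl hxk]
      simp only [Finset.sum_add_distrib, ← Finset.smul_sum, smul_add, smul_smul,
        TensorProduct.add_tmul, TensorProduct.tmul_add, ← TensorProduct.smul_tmul',
        TensorProduct.tmul_smul, TensorProduct.sum_tmul, TensorProduct.tmul_sum]
      module
    rw [rhs_eq, lhs_eq, h1, h2]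
  refine ⟨hcomul, fun n => ?_⟩
  have hmem : ∀ a b : H, a ∈ Algebra.adjoin K (Set.range x) →
      b ∈ Algebra.adjoin K (Set.range x) →
      a ⊗ₜ[K] b ∈ LinearMap.range (TensorProduct.mapIncl
        (Subalgebra.toSubmodule (Algebra.adjoin K (Set.range x)))
        (Subalgebra.toSubmodule (Algebra.adjoin K (Set.range x)))) := by
    intro a b ha hb
    exact ⟨(⟨a, ha⟩ : (Subalgebra.toSubmodule (Algebra.adjoin K (Set.range x)))) ⊗ₜ[K]
      (⟨b, hb⟩ : (Subalgebra.toSubmodule (Algebra.adjoin K (Set.range x)))), rfl⟩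
  have hxmem : ∀ k, x k ∈ Algebra.adjoin K (Set.range x) :=
    fun k => Algebra.subset_adjoin ⟨k, rfl⟩
  rcases Nat.eq_zero_or_pos n with rfl | hn
  · rw [hx0, map_zero]
    exact zero_mem _
  · rw [hcomul n hn]
    refine add_mem (add_mem (hmem _ _ (hxmem n) (one_mem _))
      (hmem _ _ (one_mem _) (hxmem n)))
      (Submodule.smul_mem _ _ (Submodule.sum_mem _ fun k hk =>
        hmem _ _ (hxmem _) (hxmem _)))
end

section
/- The solution of x = Σ_{j∈J'} B_j(1+αx) + Σ_{j∈J''} B_j(1) decomposes as x = x' + x'' where x' = Σ_{k≥1} Σ_{i_1,…,i_k∈J'} α^{k−1} B_{i_1}∘⋯∘B_{i_k}(1) and x'' = Σ_{k≥1} Σ_{i_1,…,i_{k−1}∈J', i_k∈J''} α^{k−1} B_{i_1}∘⋯∘B_{i_k}(1), and these satisfy Δ(x') = x'⊗1 + 1⊗x' + αx'⊗x' and Δ(x'') = x''⊗1 + 1⊗x'' + αx''⊗x'. -/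
open TensorProduct Finset

/-- The degree-`n` component of `x' = Σ_{k≥1} Σ_{i_1,…,i_k∈J'} α^{k−1} B_{i_1}∘⋯∘B_{i_k}(1)`. -/
noncomputable def ladderPrime (K : Type*) [Field K] (H : Type*) [CommRing H] [Algebra K H]
    (α : K) (B : ℕ → H →ₗ[K] H) (J' : Set ℕ) [DecidablePred (· ∈ J')] (n : ℕ) : H :=
  ∑ k ∈ Finset.Icc 1 n,
    ∑ c ∈ (Finset.Nat.antidiagonalTuple k n).filter (fun c => ∀ i, c i ∈ J'),
      α ^ (k - 1) • ((List.ofFn fun i => B (c i)).foldr LinearMap.comp LinearMap.id) 1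

/-- The degree-`n` component of
`x'' = Σ_{k≥1} Σ_{i_1,…,i_{k−1}∈J', i_k∈J''} α^{k−1} B_{i_1}∘⋯∘B_{i_k}(1)`. -/
noncomputable def ladderSecond (K : Type*) [Field K] (H : Type*) [CommRing H] [Algebra K H]
    (α : K) (B : ℕ → H →ₗ[K] H) (J' J'' : Set ℕ)
    [DecidablePred (· ∈ J')] [DecidablePred (· ∈ J'')] (n : ℕ) : H :=
  ∑ k ∈ Finset.Icc 1 n,
    ∑ c ∈ (Finset.Nat.antidiagonalTuple k n).filter
      (fun c => ∀ i : Fin k, if (i : ℕ) + 1 = k then c i ∈ J'' else c i ∈ J'),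
      α ^ (k - 1) • ((List.ofFn fun i => B (c i)).foldr LinearMap.comp LinearMap.id) 1

section Aux

variable {K : Type*} [Field K] {H : Type*} [CommRing H] [Algebra K H]
  (α : K) (B : ℕ → H →ₗ[K] H) (J' S : Set ℕ)
  [DecidablePred (· ∈ J')] [DecidablePred (· ∈ S)]

/-- generic ladder series component: last index in `S`, others in `J'`. -/
noncomputable def lad (n : ℕ) : H :=
  ∑ k ∈ Finset.Icc 1 n,
    ∑ c ∈ (Finset.Nat.antidiagonalTuple k n).filter
      (fun c => ∀ i : Fin k, if (i : ℕ) + 1 = k then c i ∈ S else c i ∈ J'),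
      α ^ (k - 1) • ((List.ofFn fun i => B (c i)).foldr LinearMap.comp LinearMap.id) 1

lemma lad_zero : lad α B J' S 0 = 0 := by simp [lad]

lemma lad_filter_empty (hJ' : ∀ j ∈ J', 0 < j) (hS : ∀ j ∈ S, 0 < j)
    {k n : ℕ} (h : n < k) :
    (Finset.Nat.antidiagonalTuple k n).filter
      (fun c => ∀ i : Fin k, if (i : ℕ) + 1 = k then c i ∈ S else c i ∈ J') = ∅ := by
  rw [Finset.filter_eq_empty_iff]
  intro c hc hcP
  rw [Finset.Nat.mem_antidiagonalTuple] at hc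
  have h1 : ∀ i : Fin k, 1 ≤ c i := by
    intro i
    have := hcP i
    split at this
    · exact hS _ this
    · exact hJ' _ this
  have hk : (k : ℕ) ≤ ∑ i, c i := by
    calc (k : ℕ) = ∑ _i : Fin k, 1 := by simp
    _ ≤ ∑ i, c i := Finset.sum_le_sum fun i _ => h1 i
  omega

lemma lad_eq_sum (hJ' : ∀ j ∈ J', 0 < j) (hS : ∀ j ∈ S, 0 < j) {n N : ℕ} (h : n ≤ N) :
    lad α B J' S n =
    ∑ k ∈ Finset.Icc 1 N,
      ∑ c ∈ (Finset.Nat.antidiagonalTuple k n).filter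
        (fun c => ∀ i : Fin k, if (i : ℕ) + 1 = k then c i ∈ S else c i ∈ J'),
        α ^ (k - 1) • ((List.ofFn fun i => B (c i)).foldr LinearMap.comp LinearMap.id) 1 := by
  rw [lad]
  apply Finset.sum_subset (Finset.Icc_subset_Icc_right h)
  intro k hk hk'
  simp only [Finset.mem_Icc] at hk hk'
  rw [lad_filter_empty J' S hJ' hS (by omega), Finset.sum_empty]







lemma fold_cons {k : ℕ} (j : ℕ) (c : Fin k → ℕ) :
    ((List.ofFn fun i : Fin (k+1) => B ((Fin.cons j c : Fin (k+1) → ℕ) i)).foldr LinearMap.comp LinearMap.id) 1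
    = B j (((List.ofFn fun i : Fin k => B (c i)).foldr LinearMap.comp LinearMap.id) 1) := by
  rw [List.ofFn_succ]
  simp [Fin.cons_succ]

lemma sum_AT_succ {M : Type*} [AddCommMonoid M] (k n : ℕ) (hk : 1 ≤ k)
    (f : (Fin (k+1) → ℕ) → M) :
    ∑ c ∈ (Finset.Nat.antidiagonalTuple (k+1) n).filter
      (fun c => ∀ i : Fin (k+1), if (i : ℕ) + 1 = k+1 then c i ∈ S else c i ∈ J'),
      f c
    = ∑ j ∈ (Finset.range (n+1)).filter (· ∈ J'),
        ∑ c ∈ (Finset.Nat.antidiagonalTuple k (n - j)).filter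
          (fun c => ∀ i : Fin k, if (i : ℕ) + 1 = k then c i ∈ S else c i ∈ J'),
          f (Fin.cons j c) := by
  rw [Finset.sum_sigma']
  apply Finset.sum_nbij' (fun c => (⟨c 0, Fin.tail c⟩ : Σ _j : ℕ, Fin k → ℕ))
    (fun p => Fin.cons p.1 p.2)
  · -- hi
    intro c hc
    simp only [Finset.mem_filter, Finset.Nat.mem_antidiagonalTuple] at hc
    obtain ⟨hsum, hP⟩ := hc
    have h0 : c 0 ∈ J' := by
      have := hP 0
      rwa [if_neg (by simp; omega)] at this
    have hle : c 0 ≤ n := by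
      rw [← hsum]
      exact Finset.single_le_sum (fun i _ => Nat.zero_le _) (Finset.mem_univ 0)
    have htail : ∑ i, Fin.tail c i = n - c 0 := by
      have := Fin.sum_univ_succ c
      unfold Fin.tail
      omega
    refine Finset.mem_sigma.mpr ⟨?_, ?_⟩
    · simp only [Finset.mem_filter, Finset.mem_range]
      exact ⟨by omega, h0⟩
    · simp only [Finset.mem_filter, Finset.Nat.mem_antidiagonalTuple]
      refine ⟨htail, fun i => ?_⟩
      have := hP i.succ
      simp only [Fin.val_succ] at this
      by_cases hik : (i : ℕ) + 1 = k
      · rw [if_pos hik]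
        rwa [if_pos (by omega)] at this
      · rw [if_neg hik]
        rwa [if_neg (by omega)] at this
  · -- hj
    rintro ⟨j, c⟩ hp
    simp only [Finset.mem_sigma, Finset.mem_filter, Finset.mem_range,
      Finset.Nat.mem_antidiagonalTuple] at hp
    obtain ⟨⟨hjn, hjJ⟩, hsum, hP⟩ := hp
    simp only [Finset.mem_filter, Finset.Nat.mem_antidiagonalTuple]
    constructor
    · rw [Fin.sum_cons, hsum]; omega
    · intro i
      induction i using Fin.cases with
      | zero =>
        rw [Fin.cons_zero, if_neg (by simp; omega)]
        exact hjJ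
      | succ i =>
        rw [Fin.cons_succ]
        have := hP i
        simp only [Fin.val_succ]
        by_cases hik : (i : ℕ) + 1 = k
        · rw [if_pos (by omega)]
          rwa [if_pos hik] at this
        · rw [if_neg (by omega)]
          rwa [if_neg hik] at this
  · -- left_inv
    intro c _
    simp only
    rw [Fin.cons_self_tail]
  · -- right_inv
    rintro ⟨j, c⟩ _
    simp
  · intro c _
    simp only
    rw [Fin.cons_self_tail]










lemma lad_rec (hJ' : ∀ j ∈ J', 0 < j) (hS : ∀ j ∈ S, 0 < j) {n : ℕ} (hn : 1 ≤ n) :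
    lad α B J' S n = (if n ∈ S then B n 1 else 0) +
      α • ∑ j ∈ (Finset.range (n+1)).filter (· ∈ J'), B j (lad α B J' S (n - j)) := by
  have hsplit : Finset.Icc 1 n = insert 1 (Finset.Icc 2 n) := by
    ext m; simp only [Finset.mem_Icc, Finset.mem_insert]; omega
  rw [lad, hsplit, Finset.sum_insert (by simp [Finset.mem_Icc])]
  congr 1
  · -- k = 1 term
    rw [Finset.Nat.antidiagonalTuple_one, Finset.filter_singleton]
    by_cases hnS : n ∈ S
    · rw [if_pos ?side, Finset.sum_singleton, if_pos hnS]
      case side =>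
        intro i
        fin_cases i
        simpa using hnS
      simp
    · rw [if_neg ?side2, Finset.sum_empty, if_neg hnS]
      case side2 =>
        intro hc
        exact hnS (by simpa using hc 0)
  · -- k ≥ 2 part
    have hmap : Finset.Icc 2 n
        = Finset.map ⟨Nat.succ, Nat.succ_injective⟩ (Finset.Icc 1 (n-1)) := by
      ext m; simp only [Finset.mem_Icc, Finset.mem_map, Function.Embedding.coeFn_mk]
      constructor
      · intro h; exact ⟨m - 1, by omega, by omega⟩
      · rintro ⟨a, ha, rfl⟩; omega
    rw [hmap, Finset.sum_map, Finset.smul_sum]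
    simp only [Function.Embedding.coeFn_mk, Nat.succ_eq_add_one]
    have step1 : ∀ k' ∈ Finset.Icc 1 (n-1),
        (∑ c ∈ (Finset.Nat.antidiagonalTuple (k'+1) n).filter
            (fun c => ∀ i : Fin (k'+1), if (i : ℕ) + 1 = k'+1 then c i ∈ S else c i ∈ J'),
          α ^ (k'+1-1) • ((List.ofFn fun i => B (c i)).foldr LinearMap.comp LinearMap.id) 1)
        = ∑ j ∈ (Finset.range (n+1)).filter (· ∈ J'),
            ∑ c ∈ (Finset.Nat.antidiagonalTuple k' (n-j)).filter
              (fun c => ∀ i : Fin k', if (i : ℕ) + 1 = k' then c i ∈ S else c i ∈ J'),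
              α • (α ^ (k'-1) •
                B j (((List.ofFn fun i => B (c i)).foldr LinearMap.comp LinearMap.id) 1)) := by
      intro k' hk'
      simp only [Finset.mem_Icc] at hk'
      rw [sum_AT_succ J' S k' n hk'.1]
      apply Finset.sum_congr rfl
      intro j _
      apply Finset.sum_congr rfl
      intro c _
      rw [_root_.fold_cons]
      have h1 : k' + 1 - 1 = k' - 1 + 1 := by omega
      rw [h1, pow_succ', mul_smul]
    rw [Finset.sum_congr rfl step1, Finset.sum_comm]
    apply Finset.sum_congr rfl
    intro j hj
    simp only [Finset.mem_filter, Finset.mem_range] at hj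
    rw [lad_eq_sum α B J' S hJ' hS (show n - j ≤ n - 1 by have := hJ' j hj.2; omega),
      map_sum, Finset.smul_sum]
    apply Finset.sum_congr rfl
    intro k' _
    rw [map_sum, Finset.smul_sum]
    apply Finset.sum_congr rfl
    intro c _
    rw [map_smul]



end Aux

section Comul

variable {K : Type*} [Field K] {H : Type*} [CommRing H] [HopfAlgebra K H]
  (α : K) (B : ℕ → H →ₗ[K] H) (J' S : Set ℕ)
  [DecidablePred (· ∈ J')] [DecidablePred (· ∈ S)]

lemma comul_lad (hJ' : ∀ j ∈ J', 0 < j) (hS : ∀ j ∈ S, 0 < j)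
    (hBS : ∀ j ∈ J' ∪ S, ∀ y : H, Coalgebra.comul (R := K) (B j y) =
      B j y ⊗ₜ[K] 1 + TensorProduct.map LinearMap.id (B j) (Coalgebra.comul (R := K) y))
    (n : ℕ) :
    Coalgebra.comul (R := K) (lad α B J' S n) =
      lad α B J' S n ⊗ₜ[K] 1 + 1 ⊗ₜ[K] lad α B J' S n +
        α • ∑ k ∈ Finset.Ioo 0 n, lad α B J' S (n - k) ⊗ₜ[K] lad α B J' J' k := by
  induction n using Nat.strong_induction_on with
  | _ n ih =>
  rcases Nat.eq_zero_or_pos n with rfl | hn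
  · simp [lad_zero]
  · have hcomul1 : Coalgebra.comul (R := K) (1 : H) = (1 : H) ⊗ₜ[K] 1 := by
      rw [Bialgebra.comul_one, Algebra.TensorProduct.one_def]
    have hite : Coalgebra.comul (R := K) (if n ∈ S then B n 1 else 0)
        = (if n ∈ S then B n 1 else 0) ⊗ₜ[K] 1 + 1 ⊗ₜ[K] (if n ∈ S then B n 1 else 0) := by
      split_ifs with h
      · rw [hBS n (Or.inr h) 1, hcomul1, TensorProduct.map_tmul, LinearMap.id_apply]
      · simp
    have hterm : ∀ j ∈ (Finset.range (n+1)).filter (· ∈ J'),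
        Coalgebra.comul (R := K) (B j (lad α B J' S (n-j)))
        = B j (lad α B J' S (n-j)) ⊗ₜ[K] 1
          + (lad α B J' S (n-j) ⊗ₜ[K] B j 1
          + 1 ⊗ₜ[K] B j (lad α B J' S (n-j))
          + α • ∑ k ∈ Finset.Ioo 0 (n-j),
              lad α B J' S (n-j-k) ⊗ₜ[K] B j (lad α B J' J' k)) := by
      intro j hj
      obtain ⟨hjr, hjJ⟩ := Finset.mem_filter.mp hj
      rw [hBS j (Or.inl hjJ), ih (n-j) (Nat.sub_lt hn (hJ' j hjJ))]
      simp only [map_add, map_smul, map_sum, TensorProduct.map_tmul, LinearMap.id_apply]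
    -- the key combinatorial identity
    have hA : ∑ m ∈ Finset.Ioo 0 n,
          (if m ∈ J' then lad α B J' S (n-m) ⊗ₜ[K] B m 1 else 0)
        = ∑ j ∈ (Finset.range (n+1)).filter (· ∈ J'), lad α B J' S (n-j) ⊗ₜ[K] B j 1 := by
      rw [← Finset.sum_filter]
      apply Finset.sum_subset
      · intro j hj
        simp only [Finset.mem_filter, Finset.mem_Ioo, Finset.mem_range] at hj ⊢
        exact ⟨by omega, hj.2⟩
      · intro j hj hj'
        simp only [Finset.mem_filter, Finset.mem_Ioo, Finset.mem_range] at hj hj'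
        have hj0 := hJ' j hj.2
        have : n - j = 0 := by
          rcases hj with ⟨h1, h2⟩
          by_contra h
          exact hj' ⟨⟨by omega, by omega⟩, h2⟩
        rw [this, lad_zero, TensorProduct.zero_tmul]
    have hB2 : ∑ m ∈ Finset.Ioo 0 n, ∑ j ∈ (Finset.range (m+1)).filter (· ∈ J'),
          lad α B J' S (n-m) ⊗ₜ[K] B j (lad α B J' J' (m-j))
        = ∑ j ∈ (Finset.range (n+1)).filter (· ∈ J'), ∑ k ∈ Finset.Ioo 0 (n-j),
          lad α B J' S (n-j-k) ⊗ₜ[K] B j (lad α B J' J' k) := by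
      have shrink : ∀ m ∈ Finset.Ioo 0 n,
          ∑ j ∈ (Finset.range (m+1)).filter (· ∈ J'),
            lad α B J' S (n-m) ⊗ₜ[K] B j (lad α B J' J' (m-j))
          = ∑ j ∈ (Finset.range m).filter (· ∈ J'),
            lad α B J' S (n-m) ⊗ₜ[K] B j (lad α B J' J' (m-j)) := by
        intro m _
        symm
        apply Finset.sum_subset
        · intro j hj
          simp only [Finset.mem_filter, Finset.mem_range] at hj ⊢
          exact ⟨by omega, hj.2⟩
        · intro j hj hj'
          simp only [Finset.mem_filter, Finset.mem_range] at hj hj'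
          have : j = m := by
            rcases hj with ⟨h1, h2⟩
            by_contra h
            exact hj' ⟨by omega, h2⟩
          rw [this, Nat.sub_self, lad_zero, map_zero, TensorProduct.tmul_zero]
      rw [Finset.sum_congr rfl shrink, Finset.sum_sigma', Finset.sum_sigma']
      apply Finset.sum_nbij' (fun p => (⟨p.2, p.1 - p.2⟩ : Σ _j : ℕ, ℕ))
        (fun p => (⟨p.1 + p.2, p.1⟩ : Σ _m : ℕ, ℕ))
      · rintro ⟨m, j⟩ hp
        simp only [Finset.mem_sigma, Finset.mem_Ioo, Finset.mem_filter, Finset.mem_range]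
          at hp ⊢
        exact ⟨⟨by omega, hp.2.2⟩, by omega, by omega⟩
      · rintro ⟨j, k⟩ hp
        simp only [Finset.mem_sigma, Finset.mem_Ioo, Finset.mem_filter, Finset.mem_range]
          at hp ⊢
        exact ⟨⟨by omega, by omega⟩, by omega, hp.1.2⟩
      · rintro ⟨m, j⟩ hp
        simp only [Finset.mem_sigma, Finset.mem_Ioo, Finset.mem_filter, Finset.mem_range] at hp
        simp only [Sigma.mk.inj_iff, heq_eq_eq]
        exact ⟨by omega, trivial⟩
      · rintro ⟨j, k⟩ hp
        simp only [Finset.mem_sigma, Finset.mem_Ioo, Finset.mem_filter, Finset.mem_range] at hp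
        simp only [Sigma.mk.inj_iff, heq_eq_eq]
        exact ⟨trivial, by omega⟩
      · rintro ⟨m, j⟩ hp
        simp only [Finset.mem_sigma, Finset.mem_Ioo, Finset.mem_filter, Finset.mem_range] at hp
        have h1 : n - m = n - j - (m - j) := by omega
        have h2 : m - j = m - j := rfl
        rw [h1]
    have hstar : ∑ m ∈ Finset.Ioo 0 n,
          lad α B J' S (n-m) ⊗ₜ[K] lad α B J' J' m
        = ∑ j ∈ (Finset.range (n+1)).filter (· ∈ J'),
            (lad α B J' S (n-j) ⊗ₜ[K] B j 1
              + α • ∑ k ∈ Finset.Ioo 0 (n-j),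
                  lad α B J' S (n-j-k) ⊗ₜ[K] B j (lad α B J' J' k)) := by
      have expand : ∀ m ∈ Finset.Ioo 0 n,
          lad α B J' S (n-m) ⊗ₜ[K] lad α B J' J' m
          = (if m ∈ J' then lad α B J' S (n-m) ⊗ₜ[K] B m 1 else 0)
            + α • ∑ j ∈ (Finset.range (m+1)).filter (· ∈ J'),
                lad α B J' S (n-m) ⊗ₜ[K] B j (lad α B J' J' (m-j)) := by
        intro m hm
        rw [Finset.mem_Ioo] at hm
        rw [lad_rec α B J' J' hJ' hJ' hm.1, TensorProduct.tmul_add,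
          TensorProduct.tmul_smul, TensorProduct.tmul_sum]
        congr 1
        split_ifs with h
        · rfl
        · rw [TensorProduct.tmul_zero]
      rw [Finset.sum_congr rfl expand, Finset.sum_add_distrib, hA, ← Finset.smul_sum, hB2,
        Finset.sum_add_distrib, ← Finset.smul_sum]
    -- now assemble
    rw [lad_rec α B J' S hJ' hS hn, map_add, map_smul, map_sum, hite,
      Finset.sum_congr rfl hterm, hstar]
    simp only [Finset.sum_add_distrib, TensorProduct.add_tmul, TensorProduct.tmul_add,
      TensorProduct.smul_tmul', TensorProduct.tmul_smul, TensorProduct.sum_tmul,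
      TensorProduct.tmul_sum, smul_add, Finset.smul_sum]
    module

end Comul

section Final

variable {K : Type*} [Field K] {H : Type*} [CommRing H] [Algebra K H]
  (α : K) (B : ℕ → H →ₗ[K] H) (J' J'' : Set ℕ)
  [DecidablePred (· ∈ J')] [DecidablePred (· ∈ J'')]

lemma ladderPrime_eq_lad (n : ℕ) :
    ladderPrime K H α B J' n = lad α B J' J' n := by
  unfold ladderPrime lad
  apply Finset.sum_congr rfl
  intro k _
  apply Finset.sum_congr _ (fun _ _ => rfl)
  apply Finset.filter_congr
  intro c _
  simp only [ite_self]

end Final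

/-- The solution of `x = Σ_{j∈J'} B_j(1+αx) + Σ_{j∈J''} B_j(1)` (given componentwise)
decomposes as `x = x' + x''` where
`x' = Σ_{k≥1} Σ_{i_1,…,i_k∈J'} α^{k−1} B_{i_1}∘⋯∘B_{i_k}(1)` and
`x'' = Σ_{k≥1} Σ_{i_1,…,i_{k−1}∈J', i_k∈J''} α^{k−1} B_{i_1}∘⋯∘B_{i_k}(1)`, and these satisfy
`Δ(x') = x'⊗1 + 1⊗x' + αx'⊗x'` and `Δ(x'') = x''⊗1 + 1⊗x'' + αx''⊗x'` (componentwise). -/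
theorem DSE_solution_decomposition (K : Type*) [Field K] [CharZero K]
    (H : Type*) [CommRing H] [HopfAlgebra K H] (α : K)
    (J' J'' : Set ℕ) [DecidablePred (· ∈ J')] [DecidablePred (· ∈ J'')]
    (hdisj : Disjoint J' J'')
    (hpos : ∀ n ∈ J' ∪ J'', 0 < n)
    (B : ℕ → H →ₗ[K] H)
    (hB : ∀ j ∈ J' ∪ J'', ∀ y : H, Coalgebra.comul (R := K) (B j y) =
      B j y ⊗ₜ[K] 1 + TensorProduct.map LinearMap.id (B j) (Coalgebra.comul (R := K) y))
    (x : ℕ → H) (hx0 : x 0 = 0)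
    (hx : ∀ n, 1 ≤ n → x n = (if n ∈ J' ∪ J'' then B n 1 else 0) +
      α • ∑ j ∈ (Finset.range (n + 1)).filter (· ∈ J'), B j (x (n - j))) :
    (∀ n, x n = ladderPrime K H α B J' n + ladderSecond K H α B J' J'' n) ∧
    (∀ n, Coalgebra.comul (R := K) (ladderPrime K H α B J' n) =
      ladderPrime K H α B J' n ⊗ₜ[K] 1 + 1 ⊗ₜ[K] ladderPrime K H α B J' n +
        α • ∑ k ∈ Finset.Ioo 0 n,
          ladderPrime K H α B J' (n - k) ⊗ₜ[K] ladderPrime K H α B J' k) ∧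
    (∀ n, Coalgebra.comul (R := K) (ladderSecond K H α B J' J'' n) =
      ladderSecond K H α B J' J'' n ⊗ₜ[K] 1 + 1 ⊗ₜ[K] ladderSecond K H α B J' J'' n +
        α • ∑ k ∈ Finset.Ioo 0 n,
          ladderSecond K H α B J' J'' (n - k) ⊗ₜ[K] ladderPrime K H α B J' k) := by
  have hJ'pos : ∀ j ∈ J', 0 < j := fun j hj => hpos j (Or.inl hj)
  have hJ''pos : ∀ j ∈ J'', 0 < j := fun j hj => hpos j (Or.inr hj)
  have hBJ' : ∀ j ∈ J' ∪ J', ∀ y : H, Coalgebra.comul (R := K) (B j y) =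
      B j y ⊗ₜ[K] 1 + TensorProduct.map LinearMap.id (B j) (Coalgebra.comul (R := K) y) :=
    fun j hj y => hB j (by rcases hj with h | h <;> exact Or.inl h) y
  have hP := comul_lad α B J' J' hJ'pos hJ'pos hBJ'
  have hS := comul_lad α B J' J'' hJ'pos hJ''pos hB
  have hPe : ∀ n, ladderPrime K H α B J' n = lad α B J' J' n :=
    ladderPrime_eq_lad α B J'
  have hSe : ∀ n, ladderSecond K H α B J' J'' n = lad α B J' J'' n := fun n => rfl
  have hx_dec : ∀ n, x n = lad α B J' J' n + lad α B J' J'' n := by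
    intro n
    induction n using Nat.strong_induction_on with
    | _ n ih =>
    rcases Nat.eq_zero_or_pos n with rfl | hn
    · rw [hx0, lad_zero, lad_zero, add_zero]
    · rw [hx n hn, lad_rec α B J' J' hJ'pos hJ'pos hn, lad_rec α B J' J'' hJ'pos hJ''pos hn]
      have hsum : ∑ j ∈ (Finset.range (n+1)).filter (· ∈ J'), B j (x (n-j))
          = ∑ j ∈ (Finset.range (n+1)).filter (· ∈ J'),
              (B j (lad α B J' J' (n-j)) + B j (lad α B J' J'' (n-j))) := by
        apply Finset.sum_congr rfl
        intro j hj
        obtain ⟨hjr, hjJ⟩ := Finset.mem_filter.mp hj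
        rw [ih (n-j) (Nat.sub_lt hn (hJ'pos j hjJ)), map_add]
      rw [hsum, Finset.sum_add_distrib, smul_add]
      have hind : (if n ∈ J' ∪ J'' then B n 1 else 0)
          = (if n ∈ J' then B n 1 else 0) + (if n ∈ J'' then B n 1 else 0) := by
        by_cases h1 : n ∈ J'
        · rw [if_pos (Set.mem_union_left _ h1), if_pos h1,
            if_neg (fun h2 => Set.disjoint_left.mp hdisj h1 h2), add_zero]
        · by_cases h2 : n ∈ J''
          · rw [if_pos (Set.mem_union_right _ h2), if_neg h1, if_pos h2, zero_add]
          · rw [if_neg (by rintro (h | h) <;> contradiction), if_neg h1, if_neg h2, add_zero]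
      rw [hind]
      abel
  refine ⟨?_, ?_, ?_⟩
  · intro n
    rw [hPe n, hSe n]
    exact hx_dec n
  · intro n
    simp only [hPe]
    exact hP n
  · intro n
    simp only [hSe, hPe]
    exact hS n
end

section
/- For λ, μ ∈ K, the formal power series f^{(j)}(h) = (1 − μh)·Q(h)^j, where Q(h) = (1−μh)^{−λ/μ} if μ ≠ 0 and Q(h) = e^{λh} if μ = 0, has coefficients given by f^{(j)}(h) = Σ_{n≥0} (λj−μ)(λj)(λj+μ)⋯(λj+μ(n−2))/n! · h^n. -/
open Classical

/-- `Q(h) = (1−μh)^{−λ/μ}` if `μ ≠ 0` (binomial formal power series) and `Q(h) = e^{λh}`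
if `μ = 0`. -/
noncomputable def Qser (K : Type*) [Field K] [CharZero K] (lam mu : K) : PowerSeries K :=
  if mu = 0 then PowerSeries.rescale lam (PowerSeries.exp K)
  else PowerSeries.mk fun n =>
    (-mu) ^ n * (∏ i ∈ Finset.range n, (-lam / mu - (i : K))) / (n.factorial : K)

namespace QserAux

open PowerSeries

variable {K : Type*} [Field K] [CharZero K]

/-- The candidate series with coefficients `∏_{i<n}(c+μi)/n!`. -/
noncomputable def A (mu c : K) : PowerSeries K :=
  PowerSeries.mk fun n => (∏ i ∈ Finset.range n, (c + mu * i)) / (n.factorial : K)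

omit [CharZero K] in
lemma coeff_A (mu c : K) (n : ℕ) :
    coeff n (A mu c) = (∏ i ∈ Finset.range n, (c + mu * i)) / (n.factorial : K) :=
  coeff_mk _ _

omit [CharZero K] in
lemma constCoeff_A (mu c : K) : constantCoeff (A mu c) = 1 := by
  rw [← coeff_zero_eq_constantCoeff_apply, coeff_A]; simp

lemma Qser_eq_A (lam mu : K) : Qser K lam mu = A mu lam := by
  unfold Qser A
  split_ifs with h
  · subst h
    ext n
    rw [coeff_rescale, coeff_exp, coeff_mk]
    have h1 : ((n.factorial : K)) ≠ 0 := by exact_mod_cast n.factorial_ne_zero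
    have : ∏ i ∈ Finset.range n, (lam + (0 : K) * i) = lam ^ n := by simp
    rw [this]
    rw [map_div₀, map_one, map_natCast]
    ring
  · ext n
    simp only [coeff_mk]
    congr 1
    rw [show ((-mu) ^ n : K) = ∏ _i ∈ Finset.range n, (-mu) by
      rw [Finset.prod_const, Finset.card_range], ← Finset.prod_mul_distrib]
    apply Finset.prod_congr rfl
    intro i _
    field_simp
    ring

lemma rec_A (mu c : K) (n : ℕ) :
    ((n : K) + 1) * coeff (n + 1) (A mu c) = (c + mu * n) * coeff n (A mu c) := by
  rw [coeff_A, coeff_A, Finset.prod_range_succ, Nat.factorial_succ]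
  have h1 : ((n.factorial : K)) ≠ 0 := Nat.cast_ne_zero.mpr n.factorial_ne_zero
  have h2 : ((n : K) + 1) ≠ 0 := Nat.cast_add_one_ne_zero n
  push_cast
  field_simp

/-- `A` satisfies the ODE `(1 - μX) A' = c A`. -/
lemma ode_A (mu c : K) :
    (1 - C mu * X) * d⁄dX K (A mu c) = C c * A mu c := by
  ext n
  have key : coeff n (C mu * X * d⁄dX K (A mu c)) = mu * (n : K) * coeff n (A mu c) := by
    cases n with
    | zero => simp [mul_assoc, coeff_zero_eq_constantCoeff]
    | succ m =>
      rw [mul_assoc, coeff_C_mul, coeff_succ_X_mul, coeff_derivative]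
      push_cast
      ring
  rw [sub_mul, one_mul, map_sub, key, coeff_derivative, coeff_C_mul]
  linear_combination rec_A mu c n

/-- Uniqueness of solutions to the ODE with given constant coefficient. -/
lemma ode_unique (mu c : K) (f g : PowerSeries K)
    (hf : (1 - C mu * X) * d⁄dX K f = C c * f)
    (hg : (1 - C mu * X) * d⁄dX K g = C c * g)
    (h0 : coeff 0 f = coeff 0 g) : f = g := by
  have hrec : ∀ (p : PowerSeries K), (1 - C mu * X) * d⁄dX K p = C c * p →
      ∀ n : ℕ, ((n : K) + 1) * coeff (n + 1) p = (c + mu * (n : K)) * coeff n p := by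
    intro p hp n
    have h := congrArg (coeff n) hp
    have key : coeff n (C mu * X * d⁄dX K p) = mu * (n : K) * coeff n p
        + mu * ((n : K) + 1) * coeff (n + 1) p - mu * ((n : K) + 1) * coeff (n + 1) p := by
      cases n with
      | zero => simp [mul_assoc, coeff_zero_eq_constantCoeff]
      | succ m =>
        rw [mul_assoc, coeff_C_mul, coeff_succ_X_mul, coeff_derivative]
        push_cast
        ring
    rw [sub_mul, one_mul, map_sub, key, coeff_derivative, coeff_C_mul] at h
    linear_combination h
  ext n
  induction n with
  | zero => exact h0
  | succ m ih =>
    have h2 : ((m : K) + 1) ≠ 0 := by exact_mod_cast (Nat.succ_ne_zero m)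
    refine mul_left_cancel₀ h2 ?_
    rw [hrec f hf m, hrec g hg m, ih]

lemma pow_eq_A (lam mu : K) (j : ℕ) (hj : 1 ≤ j) :
    (Qser K lam mu) ^ j = A mu (lam * j) := by
  apply ode_unique mu (lam * j)
  · rw [Qser_eq_A]
    have hQ := ode_A mu lam
    have hd : d⁄dX K ((A mu lam) ^ j)
        = (j : PowerSeries K) * (A mu lam) ^ (j - 1) * d⁄dX K (A mu lam) := by
      rw [Derivation.leibniz_pow, smul_eq_mul, nsmul_eq_mul, ← mul_assoc]
    have hpow : (A mu lam) ^ (j - 1) * (A mu lam) = (A mu lam) ^ j := by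
      cases j with
      | zero => omega
      | succ k => rw [Nat.succ_sub_one, pow_succ]
    have hC : (C (lam * (j : K)) : PowerSeries K) = C lam * (j : PowerSeries K) := by
      rw [map_mul, map_natCast]
    rw [hd]
    calc (1 - C mu * X) * ((j : PowerSeries K) * (A mu lam) ^ (j - 1) * d⁄dX K (A mu lam))
        = (j : PowerSeries K) * ((A mu lam) ^ (j - 1)
            * ((1 - C mu * X) * d⁄dX K (A mu lam))) := by ring
      _ = (j : PowerSeries K) * ((A mu lam) ^ (j - 1) * (C lam * A mu lam)) := by rw [hQ]
      _ = C (lam * (j : K)) * ((A mu lam) ^ (j - 1) * A mu lam) := by rw [hC]; ring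
      _ = C (lam * (j : K)) * (A mu lam) ^ j := by rw [hpow]
  · exact ode_A mu (lam * j)
  · rw [Qser_eq_A]
    simp [coeff_zero_eq_constantCoeff, constCoeff_A]

end QserAux

/-- For `λ, μ ∈ K` and `j ≥ 1`, the formal power series `f^{(j)}(h) = (1 − μh)·Q(h)^j` has
coefficients `f^{(j)}(h) = Σ_{n≥0} (λj−μ)(λj)(λj+μ)⋯(λj+μ(n−2))/n! · h^n`. -/
theorem coeff_one_sub_mul_Q_pow (K : Type*) [Field K] [CharZero K] (lam mu : K)
    (j : ℕ) (hj : 1 ≤ j) :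
    (1 - PowerSeries.C mu * PowerSeries.X) * (Qser K lam mu) ^ j =
      PowerSeries.mk fun n =>
        (∏ k ∈ Finset.range n, (lam * (j : K) + mu * ((k : K) - 1))) / (n.factorial : K) := by
  rw [QserAux.pow_eq_A lam mu j hj]
  ext n
  rw [PowerSeries.coeff_mk]
  cases n with
  | zero =>
    simp [QserAux.coeff_A, PowerSeries.coeff_zero_eq_constantCoeff, QserAux.constCoeff_A]
  | succ m =>
    rw [sub_mul, one_mul, map_sub, mul_assoc, PowerSeries.coeff_C_mul,
      PowerSeries.coeff_succ_X_mul, QserAux.coeff_A, QserAux.coeff_A]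
    have h1 : ((m.factorial : K)) ≠ 0 := by exact_mod_cast m.factorial_ne_zero
    have h2 : ((m : K) + 1) ≠ 0 := by exact_mod_cast (Nat.succ_ne_zero m)
    have hshift : ∏ k ∈ Finset.range (m + 1), (lam * (j : K) + mu * ((k : K) - 1))
        = (lam * (j : K) - mu) * ∏ i ∈ Finset.range m, (lam * (j : K) + mu * (i : K)) := by
      rw [Finset.prod_range_succ']
      push_cast
      rw [mul_comm]
      congr 1
      · ring
      · apply Finset.prod_congr rfl
        intro i _
        push_cast
        ring
    rw [hshift, Finset.prod_range_succ, Nat.factorial_succ]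
    field_simp
    push_cast
    ring
end
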